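/- Let a > 0 and let μ be the probability measure on [-a, a] ⊂ ℝ with density ρ(x) = (a - |x|)/a². Define f : [-a,a] \ {0} → ℝ by f(x) = (x/|x|)(√(2a|x| - x²) - a). Then f pushes μ forward to μ, and the plan γ = (id, f)_# μ is optimal for the two-marginal Kantorovich problem with Coulomb cost: ∫ 1/|x - f(x)| dμ(x) = inf_{γ ∈ Π(μ,μ)} ∫ 1/|x - y| dγ(x,y). -/

import Mathlib

open MeasureTheory ENNReal
open Set

noncomputable section TentAux

/-- sqrt(x(2a-x)) = sqrt(2a|x|-x^2) for x ≥ 0 -/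
def sq2 (a x : ℝ) : ℝ := Real.sqrt (x * (2*a - x))
def dd (a x : ℝ) : ℝ := x + a - sq2 a x
def gg (a t : ℝ) : ℝ := ((dd a t)^2)⁻¹
def uplus (a x : ℝ) : ℝ := (a⁻¹ + ∫ t in (0:ℝ)..a, gg a t)/2 - ∫ t in (0:ℝ)..x, gg a t
def UU (a x : ℝ) : ℝ := uplus a |x|
def Phi (a x : ℝ) : ℝ := (a^2 + 2*a*x - x*|x|)/(2*a^2)

variable {a : ℝ} (ha : 0 < a)

lemma sq2_nonneg (x : ℝ) : 0 ≤ sq2 a x := Real.sqrt_nonneg _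

lemma sq2_sq (h0 : 0 ≤ x) (h2 : x ≤ 2*a) : (sq2 a x)^2 = x * (2*a - x) :=
  Real.sq_sqrt (by nlinarith)

include ha

lemma sq2_le_a (x : ℝ) : sq2 a x ≤ a := by
  have h : x * (2*a - x) ≤ a^2 := by nlinarith [sq_nonneg (x - a)]
  calc sq2 a x ≤ Real.sqrt (a^2) := Real.sqrt_le_sqrt h
  _ = a := Real.sqrt_sq ha.le

lemma sq2_lt_a (h0 : 0 ≤ x) (hxa : x < a) : sq2 a x < a := by
  have h : x * (2*a - x) < a^2 := by nlinarith [sq_nonneg (x - a)]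
  exact (Real.sqrt_lt' ha).2 (by nlinarith)

lemma dd_pos (h0 : 0 ≤ x) : 0 < dd a x := by
  have hxa : 0 < x + a := by linarith
  have : sq2 a x < x + a := by
    rw [sq2, Real.sqrt_lt' hxa]; nlinarith [sq_nonneg x]
  unfold dd; linarith

lemma dd_ge (h0 : 0 ≤ x) (hxa : x ≤ a) : a/3 ≤ dd a x := by
  have h1 := sq2_sq (a := a) h0 (by linarith)
  have h2 := sq2_le_a ha x
  have h3 := sq2_nonneg (a := a) x
  unfold dd
  nlinarith [sq_nonneg x]

lemma continuous_sq2 : Continuous (sq2 a) :=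
  Real.continuous_sqrt.comp (by continuity)

lemma continuous_dd : Continuous (dd a) := by
  unfold dd
  exact (continuous_id.add continuous_const).sub (continuous_sq2 ha)

lemma measurable_gg : Measurable (gg a) :=
  (((continuous_dd ha).measurable).pow_const 2).inv

lemma gg_contAt (h : dd a x ≠ 0) : ContinuousAt (gg a) x := by
  exact ((continuous_dd ha).continuousAt.pow 2).inv₀ (pow_ne_zero 2 h)

lemma gg_intble (h0 : 0 ≤ x) (hy : 0 ≤ y) : IntervalIntegrable (gg a) volume x y := by
  apply ContinuousOn.intervalIntegrable
  intro t ht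
  have ht0 : 0 ≤ t := by
    rcases Set.mem_uIcc.1 ht with ⟨h, _⟩ | ⟨h, _⟩ <;> linarith
  exact (gg_contAt ha (dd_pos ha ht0).ne').continuousWithinAt

lemma uplus_hasDeriv (h0 : 0 ≤ x) : HasDerivAt (uplus a) (-(gg a x)) x := by
  have h1 : HasDerivAt (fun y => ∫ t in (0:ℝ)..y, gg a t) (gg a x) x := by
    apply intervalIntegral.integral_hasDerivAt_right (gg_intble ha le_rfl h0)
      ((measurable_gg ha).stronglyMeasurable.stronglyMeasurableAtFilter)
      (gg_contAt ha (dd_pos ha h0).ne')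
  exact HasDerivAt.const_sub ((a⁻¹ + ∫ t in (0:ℝ)..a, gg a t)/2) h1

lemma continuous_UU : Continuous (UU a) := by
  rw [continuous_iff_continuousAt]
  intro x
  exact ((uplus_hasDeriv ha (abs_nonneg x)).continuousAt).comp continuous_abs.continuousAt


lemma sq2_reflect {x : ℝ} (h0 : 0 ≤ x) (hxa : x ≤ a) :
    sq2 a (a - sq2 a x) = a - x := by
  have h1 := sq2_sq (a := a) h0 (by linarith)
  have : (a - sq2 a x) * (2*a - (a - sq2 a x)) = (a - x)^2 := by nlinarith
  rw [sq2, this, Real.sqrt_sq (by linarith)]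

lemma dd_reflect {x : ℝ} (h0 : 0 ≤ x) (hxa : x ≤ a) :
    dd a (a - sq2 a x) = dd a x := by
  rw [dd, dd, sq2_reflect ha h0 hxa]; ring

lemma sq2_a : sq2 a a = a := by
  rw [sq2, show a * (2*a - a) = a^2 by ring, Real.sqrt_sq ha.le]

lemma sq2_zero : sq2 a 0 = 0 := by simp [sq2]

lemma uplus_zero : uplus a 0 = (a⁻¹ + ∫ t in (0:ℝ)..a, gg a t)/2 := by
  simp [uplus]

lemma EE_zero {x : ℝ} (h0 : 0 ≤ x) (hxa : x ≤ a) :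
    uplus a x + uplus a (a - sq2 a x) = (dd a x)⁻¹ := by
  set EE : ℝ → ℝ := fun y => uplus a y + uplus a (a - sq2 a y) - (dd a y)⁻¹ with hEE
  have key : uplus a a + uplus a 0 = a⁻¹ := by
    simp only [uplus, intervalIntegral.integral_same]; ring
  have hEEa : EE a = 0 := by
    simp only [hEE, dd, sq2_a ha, sub_self, show a + a - a = a from by ring]
    linarith [key]
  rcases eq_or_lt_of_le h0 with h|h
  · have hEE0 : EE 0 = 0 := by
      simp only [hEE, dd, sq2_zero ha, sub_zero, zero_add]
      linarith [key]
    simp only [hEE] at hEE0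
    rw [← h] at *
    linarith [hEE0]
  -- derivative of EE is zero on (0, a]
  have hder : ∀ y ∈ Set.Ioc (0:ℝ) a, HasDerivAt EE 0 y := by
    intro y hy
    obtain ⟨hy0, hya⟩ := hy
    have harg : 0 < y * (2*a - y) := by nlinarith
    have hsy := sq2_sq (a := a) hy0.le (by linarith)
    have hsle := sq2_le_a ha y
    have h1 : HasDerivAt (fun t : ℝ => t * (2*a - t)) (2*a - 2*y) y := by
      have h := (hasDerivAt_id y).mul ((hasDerivAt_const y (2*a)).sub (hasDerivAt_id y))
      refine h.congr_deriv ?_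
      simp only [Pi.sub_apply, id_eq]; ring
    have hs : HasDerivAt (sq2 a) (1 / (2 * sq2 a y) * (2*a - 2*y)) y := by
      have h2 := (Real.hasDerivAt_sqrt harg.ne').comp y h1
      exact h2
    have hu1 : HasDerivAt (uplus a) (-(gg a y)) y := uplus_hasDeriv ha hy0.le
    have hu2 : HasDerivAt (fun t => uplus a (a - sq2 a t))
        (-(gg a (a - sq2 a y)) * (0 - 1 / (2 * sq2 a y) * (2*a - 2*y))) y :=
      (uplus_hasDeriv ha (by linarith)).comp y ((hasDerivAt_const y a).sub hs)
    have hdd : HasDerivAt (dd a) (1 - 1 / (2 * sq2 a y) * (2*a - 2*y)) y := by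
      have h := ((hasDerivAt_id y).add (hasDerivAt_const y a)).sub hs
      refine h.congr_deriv ?_
      ring
    have hinv : HasDerivAt (fun t => (dd a t)⁻¹)
        (-(1 - 1 / (2 * sq2 a y) * (2*a - 2*y)) / (dd a y)^2) y :=
      hdd.inv (dd_pos ha hy0.le).ne'
    have htot := (hu1.add hu2).sub hinv
    refine htot.congr_deriv ?_
    rw [gg, gg, dd_reflect ha hy0.le hya, div_eq_mul_inv]
    ring
  have hconst := constant_of_has_deriv_right_zero (f := EE) (a := x) (b := a)
    (fun y hy => ((hder y ⟨lt_of_lt_of_le h hy.1, hy.2⟩).continuousAt).continuousWithinAt)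
    (fun y hy => ((hder y ⟨lt_of_lt_of_le h hy.1, hy.2.le⟩).hasDerivWithinAt))
  have h2 := hconst a ⟨hxa, le_rfl⟩
  rw [hEEa] at h2
  have h3 : EE x = 0 := h2.symm
  simp only [hEE] at h3
  linarith


lemma ineq_i {x y : ℝ} (hx0 : 0 < x) (hxa : x ≤ a) (hy0 : 0 ≤ y) (hya : y ≤ a) :
    uplus a x + uplus a y ≤ (x + y)⁻¹ := by
  have hsx := sq2_sq (a := a) hx0.le (by linarith)
  have hsxle := sq2_le_a ha x
  have hsxnn := sq2_nonneg (a := a) x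
  set t := a - sq2 a x with hts
  have ht0 : 0 ≤ t := by rw [hts]; linarith
  have hta : t ≤ a := by rw [hts]; linarith
  set Gd : ℝ → ℝ := fun z => gg a z - ((x+z)^2)⁻¹ with hGdd
  set G : ℝ → ℝ := fun z => (x + z)⁻¹ - uplus a z with hGd
  have hGder : ∀ z ∈ Icc (0:ℝ) a, HasDerivAt G (Gd z) z := by
    intro z hz
    have hxz : (0:ℝ) < x + z := by linarith [hz.1]
    have h1 : HasDerivAt (fun z : ℝ => (x + z)⁻¹) (-(0 + 1) / (x+z)^2) z :=
      (((hasDerivAt_const z x).add (hasDerivAt_id z))).inv hxz.ne'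
    have h2 := h1.sub (uplus_hasDeriv ha hz.1)
    refine h2.congr_deriv ?_
    simp only [hGdd, div_eq_mul_inv]
    ring
  have hcont : ∀ s₂ ⊆ Icc (0:ℝ) a, ContinuousOn G s₂ := fun s₂ hsub z hz =>
    ((hGder z (hsub hz)).continuousAt).continuousWithinAt
  -- G is ≥ G t on [0,a]
  have hGt : G t = uplus a x := by
    have hE := EE_zero ha hx0.le hxa
    have hxt : x + t = dd a x := by rw [hts, dd]; ring
    simp only [hGd]
    rw [← hts] at hE
    rw [hxt]
    linarith
  have hkey : ∀ z ∈ Icc (0:ℝ) a, uplus a x ≤ G z := by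
    intro z hz
    rcases le_total z t with hzt | htz
    · have hanti : AntitoneOn G (Icc 0 t) := by
        refine (strictAntiOn_of_deriv_neg (convex_Icc 0 t)
          (hcont _ (Icc_subset_Icc le_rfl hta)) ?_).antitoneOn
        intro z hz
        rw [interior_Icc] at hz
        obtain ⟨hz0, hzt'⟩ := hz
        rw [(hGder z ⟨hz0.le, hzt'.le.trans hta⟩).deriv]
        -- dd a z > x + z
        have haz : (0:ℝ) < a - z := by linarith
        have h5 : x * (2*a - x) < (a - z)^2 := by
          have : sq2 a x < a - z := by rw [hts] at hzt'; linarith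
          rw [sq2, Real.sqrt_lt' haz] at this
          exact this
        have hax2 : 0 < a - x := by
          rcases eq_or_lt_of_le hxa with h | h
          · exfalso; rw [← h] at h5; nlinarith
          · linarith
        have hsz : sq2 a z < a - x := by
          rw [sq2, Real.sqrt_lt' hax2]
          nlinarith
        have hdd : x + z < dd a z := by rw [dd]; linarith
        have hxz : (0:ℝ) < x + z := by linarith
        simp only [hGdd]
        have : ((dd a z)^2)⁻¹ < ((x+z)^2)⁻¹ := by
          rw [inv_lt_inv₀ (pow_pos (dd_pos ha hz0.le) 2) (pow_pos hxz 2)]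
          nlinarith [dd_pos ha hz0.le]
        rw [gg]
        linarith
      have := hanti ⟨hz.1, hzt⟩ ⟨ht0, le_rfl⟩ hzt
      linarith [hGt]
    · have hmono : MonotoneOn G (Icc t a) := by
        refine (strictMonoOn_of_deriv_pos (convex_Icc t a)
          (hcont _ (Icc_subset_Icc ht0 le_rfl)) ?_).monotoneOn
        intro z hz
        rw [interior_Icc] at hz
        obtain ⟨htz', hza⟩ := hz
        have hz0 : 0 ≤ z := le_trans ht0 htz'.le
        rw [(hGder z ⟨hz0, hza.le⟩).deriv]
        have haz : (0:ℝ) < a - z := by linarith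
        have h5 : (a - z)^2 < x * (2*a - x) := by
          have h6 : a - z < sq2 a x := by rw [hts] at htz'; linarith
          rw [sq2] at h6
          exact (Real.lt_sqrt haz.le).1 h6
        have hsz : a - x < sq2 a z := by
          rw [sq2]
          exact (Real.lt_sqrt (by linarith)).2 (by nlinarith)
        have hdd : dd a z < x + z := by rw [dd]; linarith
        have hxz : (0:ℝ) < x + z := by linarith
        have hddpos := dd_pos ha hz0
        simp only [hGdd]
        have : ((x+z)^2)⁻¹ < ((dd a z)^2)⁻¹ := by
          rw [inv_lt_inv₀ (pow_pos hxz 2) (pow_pos hddpos 2)]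
          nlinarith
        rw [gg]
        linarith
      have := hmono ⟨le_rfl, hta⟩ ⟨htz, hz.2⟩ htz
      linarith [hGt]
  have := hkey y ⟨hy0, hya⟩
  simp only [hGd] at this
  linarith

lemma ineq_ii {x y : ℝ} (hy0 : 0 ≤ y) (hyx : y < x) (hxa : x ≤ a) :
    uplus a x + uplus a y ≤ (x - y)⁻¹ := by
  have hx0 : 0 < x := lt_of_le_of_lt hy0 hyx
  have base : uplus a x + uplus a 0 ≤ x⁻¹ := by
    have := ineq_i ha hx0 hxa (le_refl 0) ha.le
    simpa using this
  rcases eq_or_lt_of_le hy0 with h | h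
  · rw [← h]; simpa using base
  set Hd : ℝ → ℝ := fun z => ((x - z)^2)⁻¹ + gg a z with hHdd
  set H : ℝ → ℝ := fun z => (x - z)⁻¹ - uplus a z with hHd
  have hHder : ∀ z ∈ Icc (0:ℝ) y, HasDerivAt H (Hd z) z := by
    intro z hz
    have hxz : (0:ℝ) < x - z := by linarith [hz.2]
    have h1 : HasDerivAt (fun z : ℝ => (x - z)⁻¹) (-(0 - 1) / (x - z)^2) z :=
      (((hasDerivAt_const z x).sub (hasDerivAt_id z))).inv hxz.ne'
    have h2 := h1.sub (uplus_hasDeriv ha hz.1)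
    refine h2.congr_deriv ?_
    simp only [hHdd, div_eq_mul_inv]
    ring
  have hmono : MonotoneOn H (Icc 0 y) := by
    refine (strictMonoOn_of_deriv_pos (convex_Icc 0 y)
      (fun z hz => ((hHder z hz).continuousAt).continuousWithinAt) ?_).monotoneOn
    intro z hz
    rw [interior_Icc] at hz
    rw [(hHder z ⟨hz.1.le, hz.2.le⟩).deriv]
    have hxz : (0:ℝ) < x - z := by linarith [hz.2]
    have := dd_pos ha (le_of_lt hz.1)
    simp only [hHdd]
    rw [gg]
    positivity
  have h2 := hmono ⟨le_rfl, hy0⟩ ⟨hy0, le_rfl⟩ hy0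
  simp only [hHd] at h2
  simp only [sub_zero] at h2
  linarith

lemma UU_add_le {x y : ℝ} (hx : x ∈ Icc (-a) a) (hy : y ∈ Icc (-a) a) (hne : y ≠ x) (hxy : y ≤ x) :
    UU a x + UU a y ≤ |x - y|⁻¹ := by
  have hyx : y < x := lt_of_le_of_ne hxy hne
  have habs : |x - y| = x - y := abs_of_pos (by linarith)
  rw [habs]
  rcases le_or_gt 0 y with hy0 | hy0
  · rw [UU, UU, abs_of_nonneg (le_trans hy0 hxy), abs_of_nonneg hy0]
    exact ineq_ii ha hy0 hyx hx.2
  rcases lt_trichotomy 0 x with hx0 | hx0 | hx0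
  · rw [UU, UU, abs_of_pos hx0, abs_of_neg hy0]
    have := ineq_i ha hx0 hx.2 (by linarith : (0:ℝ) ≤ -y) (by linarith [hy.1])
    rw [show x - y = x + -y by ring]
    linarith
  · rw [UU, UU, ← hx0, abs_of_neg hy0]
    have := ineq_i ha (by linarith : (0:ℝ) < -y) (by linarith [hy.1]) (le_refl 0) ha.le
    simp only [abs_zero, add_zero] at this
    rw [abs_zero, show (0:ℝ) - y = -y by ring]
    linarith
  · rw [UU, UU, abs_of_neg hy0, abs_of_neg hx0]
    have := ineq_ii ha (by linarith : (0:ℝ) ≤ -x) (by linarith : -x < -y) (by linarith [hy.1])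
    rw [show x - y = -y - -x by ring]
    linarith

lemma UU_add_le' {x y : ℝ} (hx : x ∈ Icc (-a) a) (hy : y ∈ Icc (-a) a) (hne : x ≠ y) :
    UU a x + UU a y ≤ |x - y|⁻¹ := by
  rcases le_total y x with h | h
  · exact UU_add_le ha hx hy (Ne.symm hne) h
  · rw [abs_sub_comm, add_comm]
    exact UU_add_le ha hy hx hne h


/-! ### density and measure -/

def dens (a : ℝ) : ℝ → ENNReal :=
  fun x => if x ∈ Set.Icc (-a) a then ENNReal.ofReal ((a - |x|) / a ^ 2) else 0

def muT (a : ℝ) : Measure ℝ := volume.withDensity (dens a)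

def SS (a : ℝ) : Set ℝ := Ioo (-a) a \ {0}

omit ha in
lemma measurable_dens : Measurable (dens a) := by
  apply Measurable.ite measurableSet_Icc _ measurable_const
  exact ENNReal.measurable_ofReal.comp ((continuous_const.sub continuous_abs).div_const _).measurable

omit ha in
lemma muT_apply {s : Set ℝ} (hs : MeasurableSet s) :
    muT a s = ∫⁻ x in s ∩ Icc (-a) a, ENNReal.ofReal ((a - |x|) / a ^ 2) := by
  rw [muT, withDensity_apply _ hs]
  have : dens a = (Icc (-a) a).indicator (fun x => ENNReal.ofReal ((a - |x|) / a ^ 2)) := by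
    funext x
    rw [Set.indicator_apply, dens]
  rw [this, setLIntegral_indicator measurableSet_Icc, Set.inter_comm]

omit ha in
lemma muT_null {s : Set ℝ} (hs : MeasurableSet s) (h : volume (s ∩ Icc (-a) a) = 0) :
    muT a s = 0 := by
  rw [muT_apply hs]
  exact setLIntegral_measure_zero _ _ h

omit ha in
lemma muT_singleton (p : ℝ) : muT a {p} = 0 :=
  muT_null (measurableSet_singleton p)
    (measure_mono_null inter_subset_left (measure_singleton p))

omit ha in
lemma hasDerivAt_mul_abs (x : ℝ) : HasDerivAt (fun t : ℝ => t * |t|) (2 * |x|) x := by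
  rcases lt_trichotomy x 0 with h | h | h
  · have hev : (fun t : ℝ => -(t*t)) =ᶠ[nhds x] (fun t : ℝ => t * |t|) := by
      filter_upwards [Iio_mem_nhds h] with t ht
      rw [abs_of_neg ht]; ring
    have h1 : HasDerivAt (fun t : ℝ => -(t*t)) (2*|x|) x := by
      have h2 := ((hasDerivAt_id x).mul (hasDerivAt_id x)).neg
      refine h2.congr_deriv ?_
      rw [abs_of_neg h]; simp only [id_eq]; ring
    exact h1.congr_of_eventuallyEq hev.symm
  · subst h
    rw [hasDerivAt_iff_tendsto_slope]
    have heq : ∀ᶠ t in nhdsWithin 0 {(0:ℝ)}ᶜ, |t| = slope (fun t : ℝ => t * |t|) 0 t := by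
      filter_upwards [self_mem_nhdsWithin] with t ht
      have ht' : t ≠ 0 := ht
      rw [slope_def_field]
      field_simp
      simp
    have h2 : Filter.Tendsto (fun t : ℝ => |t|) (nhdsWithin 0 {(0:ℝ)}ᶜ) (nhds 0) :=
      (continuous_abs.tendsto' 0 0 abs_zero).mono_left nhdsWithin_le_nhds
    simpa using h2.congr' heq
  · have hev : (fun t : ℝ => t*t) =ᶠ[nhds x] (fun t : ℝ => t * |t|) := by
      filter_upwards [Ioi_mem_nhds h] with t ht
      rw [abs_of_pos ht]
    have h1 : HasDerivAt (fun t : ℝ => t*t) (2*|x|) x := by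
      have h2 := (hasDerivAt_id x).mul (hasDerivAt_id x)
      refine h2.congr_deriv ?_
      rw [abs_of_pos h]; simp only [id_eq]; ring
    exact h1.congr_of_eventuallyEq hev.symm

lemma hasDerivAt_Phi (x : ℝ) : HasDerivAt (Phi a) ((a - |x|) / a ^ 2) x := by
  have ha' : a ≠ 0 := ha.ne'
  have h1 : HasDerivAt (fun x : ℝ => a^2 + 2*a*x - x*|x|) (2*a - 2*|x|) x := by
    have h2 := (HasDerivAt.const_add (a^2)
      (HasDerivAt.const_mul (2*a) (hasDerivAt_id x))).sub (hasDerivAt_mul_abs x)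
    refine h2.congr_deriv ?_
    ring
  have h3 := h1.div_const (2*a^2)
  have h4 : Phi a = fun x : ℝ => (a^2 + 2*a*x - x*|x|)/(2*a^2) := rfl
  rw [h4]
  refine h3.congr_deriv ?_
  field_simp

lemma dens_core {p q : ℝ} (hp : -a ≤ p) (hq : q ≤ a) (hpq : p ≤ q) :
    ∫⁻ x in Ioc p q, ENNReal.ofReal ((a - |x|) / a ^ 2) = ENNReal.ofReal (Phi a q - Phi a p) := by
  have hcont : Continuous (fun x : ℝ => (a - |x|)/a^2) :=
    (continuous_const.sub continuous_abs).div_const _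
  have hint : IntegrableOn (fun x : ℝ => (a - |x|)/a^2) (Ioc p q) := hcont.integrableOn_Ioc
  have hnn : 0 ≤ᶠ[ae (volume.restrict (Ioc p q))] (fun x : ℝ => (a - |x|)/a^2) := by
    rw [Filter.EventuallyLE, ae_restrict_iff' measurableSet_Ioc]
    refine ae_of_all _ (fun x hx => ?_)
    have h1 : |x| ≤ a := abs_le.2 ⟨le_trans hp hx.1.le, le_trans hx.2 hq⟩
    have h2 : (0:ℝ) ≤ a - |x| := by linarith
    positivity
  rw [← ofReal_integral_eq_lintegral_ofReal hint hnn]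
  congr 1
  rw [← intervalIntegral.integral_of_le hpq]
  rw [intervalIntegral.integral_eq_sub_of_hasDerivAt
    (fun x _ => hasDerivAt_Phi ha x) (hcont.intervalIntegrable p q)]

lemma muT_Ioc {p q : ℝ} (hp : -a ≤ p) (hq : q ≤ a) (hpq : p ≤ q) :
    muT a (Ioc p q) = ENNReal.ofReal (Phi a q - Phi a p) := by
  rw [muT_apply measurableSet_Ioc,
    inter_eq_left.2 ((Ioc_subset_Icc_self).trans (Icc_subset_Icc hp hq)),
    dens_core ha hp hq hpq]

lemma Phi_neg_a : Phi a (-a) = 0 := by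
  have h : a^2 + 2*a*(-a) - (-a)*|(-a)| = 0 := by
    rw [abs_neg, abs_of_pos ha]; ring
  rw [Phi, h, zero_div]

lemma Phi_a : Phi a a = 1 := by
  have ha' : a ≠ 0 := ha.ne'
  rw [Phi, abs_of_pos ha]
  field_simp
  ring

lemma Phi_zero : Phi a 0 = 1/2 := by
  have ha' : a ≠ 0 := ha.ne'
  rw [Phi]
  simp only [abs_zero, mul_zero, zero_mul, add_zero, sub_zero]
  field_simp

lemma muT_Iic {c : ℝ} (h1 : -a ≤ c) (h2 : c ≤ a) : muT a (Iic c) = ENNReal.ofReal (Phi a c) := by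
  rw [muT_apply measurableSet_Iic]
  have hset : Iic c ∩ Icc (-a) a = Icc (-a) c := by
    ext x
    simp only [mem_inter_iff, mem_Iic, mem_Icc]
    constructor
    · rintro ⟨h, h3, _⟩; exact ⟨h3, h⟩
    · rintro ⟨h3, h⟩; exact ⟨h, h3, h.trans h2⟩
  rw [hset, setLIntegral_congr (Ioc_ae_eq_Icc (α := ℝ) (a := -a) (b := c)).symm,
    dens_core ha le_rfl h2 h1, Phi_neg_a ha, sub_zero]

theorem muT_prob : IsProbabilityMeasure (muT a) := by
  constructor
  rw [muT_apply MeasurableSet.univ, univ_inter,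
    setLIntegral_congr (Ioc_ae_eq_Icc (α := ℝ) (a := -a) (b := a)).symm,
    dens_core ha le_rfl le_rfl (by linarith), Phi_neg_a ha, Phi_a ha]
  simp

omit ha in
lemma muT_SS_compl : muT a ((SS a)ᶜ) = 0 := by
    apply muT_null ((measurableSet_Ioo.diff (measurableSet_singleton 0)).compl)
    refine measure_mono_null ?_
      (Set.Finite.measure_zero (by simp : ({-a, a, 0} : Set ℝ).Finite) _)
    rintro x ⟨hx1, hxI⟩
    simp only [SS, mem_compl_iff, mem_diff, mem_Ioo, mem_singleton_iff, not_and, not_not] at hx1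
    simp only [mem_Icc] at hxI
    obtain ⟨hx2, hx3⟩ := hxI
    simp only [mem_insert_iff, mem_singleton_iff]
    by_cases h0 : x = 0
    · tauto
    · rcases eq_or_lt_of_le hx2 with h | h
      · left; exact h.symm
      rcases eq_or_lt_of_le hx3 with h' | h'
      · right; left; exact h'
      · exact absurd (hx1 ⟨h, h'⟩) h0

omit ha in
lemma muT_inter_S (T : Set ℝ) : muT a T = muT a (T ∩ SS a) := by
  have hSc : muT a ((SS a)ᶜ) = 0 := muT_SS_compl
  apply le_antisymm
  · calc muT a T ≤ muT a (T ∩ SS a) + muT a (T \ SS a) := measure_le_inter_add_diff _ _ _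
    _ ≤ muT a (T ∩ SS a) + muT a ((SS a)ᶜ) := by
        gcongr
        exact fun x hx => hx.2
    _ = muT a (T ∩ SS a) := by rw [hSc, add_zero]
  · exact measure_mono inter_subset_left


/-! ### the map f -/

variable {f : ℝ → ℝ}

omit ha in
lemma f_pos (hf : ∀ x, x ≠ 0 → f x = (x / |x|) * (Real.sqrt (2 * a * |x| - x ^ 2) - a))
    {x : ℝ} (hx : 0 < x) : f x = sq2 a x - a := by
  rw [hf x hx.ne', abs_of_pos hx, div_self hx.ne', one_mul, sq2]
  congr 2
  ring

omit ha in
lemma f_neg (hf : ∀ x, x ≠ 0 → f x = (x / |x|) * (Real.sqrt (2 * a * |x| - x ^ 2) - a))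
    {x : ℝ} (hx : x < 0) : f x = a - sq2 a (-x) := by
  rw [hf x hx.ne, abs_of_neg hx, show x / -x = -1 by rw [div_neg, div_self hx.ne], sq2]
  have harg : 2 * a * -x - x ^ 2 = -x * (2*a - -x) := by ring
  rw [harg]
  ring

omit ha in
lemma f_measurable (hf : ∀ x, x ≠ 0 → f x = (x / |x|) * (Real.sqrt (2 * a * |x| - x ^ 2) - a)) :
    Measurable f := by
  have hrw : f = fun x => if x = 0 then f 0
      else (x / |x|) * (Real.sqrt (2 * a * |x| - x ^ 2) - a) := by
    funext x
    split_ifs with h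
    · rw [h]
    · exact hf x h
  rw [hrw]
  refine Measurable.ite (MeasurableSet.singleton 0 : MeasurableSet {x : ℝ | x = 0})
    measurable_const ?_
  apply Measurable.mul
  · exact measurable_id.div measurable_abs
  · apply Measurable.sub _ measurable_const
    exact Real.continuous_sqrt.measurable.comp
      (((measurable_const.mul measurable_abs)).sub (measurable_id.pow_const 2))

/-- the fundamental pointwise facts about `f` on the support. -/
lemma f_spec (hf : ∀ x, x ≠ 0 → f x = (x / |x|) * (Real.sqrt (2 * a * |x| - x ^ 2) - a))
    {x : ℝ} (hx : x ∈ Ioo (-a) a) (hx0 : x ≠ 0) :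
    f x ∈ Icc (-a) a ∧ |x - f x| = dd a |x| ∧
      UU a x + UU a (f x) = (dd a |x|)⁻¹ := by
  obtain ⟨hx1, hx2⟩ := hx
  rcases lt_or_gt_of_ne hx0 with hneg | hpos
  · -- negative x
    have hxe := f_neg (a := a) hf hneg
    have hs0 := sq2_nonneg (a := a) (-x)
    have hsle := sq2_le_a ha (-x)
    have hslt := sq2_lt_a ha (a := a) (by linarith : (0:ℝ) ≤ -x) (by linarith)
    have hfpos : 0 < f x := by rw [hxe]; linarith
    have habs : |x - f x| = dd a (-x) := by
      rw [abs_of_neg (by linarith : x - f x < 0), hxe, dd]; ring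
    refine ⟨⟨by linarith, by rw [hxe]; linarith⟩, ?_, ?_⟩
    · rw [abs_of_neg hneg]; exact habs
    · rw [abs_of_neg hneg, UU, UU, abs_of_neg hneg, abs_of_pos hfpos, hxe]
      exact EE_zero ha (by linarith) (by linarith)
  · -- positive x
    have hxe := f_pos (a := a) hf hpos
    have hs0 := sq2_nonneg (a := a) x
    have hsle := sq2_le_a ha x
    have hslt := sq2_lt_a ha (a := a) hpos.le hx2
    have hfneg : f x < 0 := by rw [hxe]; linarith
    have habs : |x - f x| = dd a x := by
      rw [abs_of_pos (by linarith : 0 < x - f x), hxe, dd]; ring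
    refine ⟨⟨by rw [hxe]; linarith, by linarith⟩, ?_, ?_⟩
    · rw [abs_of_pos hpos]; exact habs
    · rw [abs_of_pos hpos, UU, UU, abs_of_pos hpos, abs_of_neg hfneg, hxe,
        show -(sq2 a x - a) = a - sq2 a x by ring]
      exact EE_zero ha hpos.le hx2.le


lemma map_f_eq (hf : ∀ x, x ≠ 0 → f x = (x / |x|) * (Real.sqrt (2 * a * |x| - x ^ 2) - a)) :
    Measure.map f (muT a) = muT a := by
  have ha' : a ≠ 0 := ha.ne'
  have hfm := f_measurable (a := a) hf
  haveI : IsProbabilityMeasure (muT a) := muT_prob ha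
  haveI : IsProbabilityMeasure (Measure.map f (muT a)) :=
    Measure.isProbabilityMeasure_map hfm.aemeasurable
  apply Measure.ext_of_Iic
  intro c
  rw [Measure.map_apply hfm measurableSet_Iic, muT_inter_S (f ⁻¹' Iic c)]
  rcases lt_or_ge c (-a) with hc | hc
  · -- c < -a : both sides are zero
    have h1 : f ⁻¹' Iic c ∩ SS a = ∅ := by
      rw [eq_empty_iff_forall_notMem]
      rintro x ⟨hfx, ⟨⟨hx1, hx2⟩, hx0⟩⟩
      rw [mem_preimage, mem_Iic] at hfx
      rcases lt_or_gt_of_ne (hx0 : x ≠ 0) with hneg | hpos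
      · have hxe := f_neg (a := a) hf hneg
        have := sq2_le_a ha (-x)
        rw [hxe] at hfx; linarith
      · have hxe := f_pos (a := a) hf hpos
        have := sq2_nonneg (a := a) x
        rw [hxe] at hfx; linarith
    rw [h1, measure_empty, muT_inter_S (Iic c)]
    have h2 : Iic c ∩ SS a = ∅ := by
      rw [eq_empty_iff_forall_notMem]
      rintro x ⟨hx, ⟨⟨hx1, _⟩, _⟩⟩
      rw [mem_Iic] at hx; linarith
    rw [h2, measure_empty]
  rcases le_or_gt c 0 with hc0 | hc0
  · -- -a ≤ c ≤ 0
    set w := Real.sqrt (a^2 - (a+c)^2) with hwdef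
    have hwnn : 0 ≤ a^2 - (a+c)^2 := by nlinarith
    have hw2 : w^2 = a^2 - (a+c)^2 := Real.sq_sqrt hwnn
    have hw0 : 0 ≤ w := Real.sqrt_nonneg _
    have hwa : w ≤ a := by nlinarith
    have hset : f ⁻¹' Iic c ∩ SS a = Ioc 0 (a - w) \ {a} := by
      ext x
      simp only [mem_inter_iff, mem_preimage, mem_Iic, SS, mem_diff, mem_Ioo,
        mem_singleton_iff, mem_Ioc]
      constructor
      · rintro ⟨hfx, ⟨⟨hx1, hx2⟩, hx0⟩⟩
        rcases lt_or_gt_of_ne (hx0 : x ≠ 0) with hneg | hpos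
        · exfalso
          have hxe := f_neg (a := a) hf hneg
          have hslt := sq2_lt_a ha (by linarith : (0:ℝ) ≤ -x) (by linarith)
          rw [hxe] at hfx; linarith
        · have hxe := f_pos (a := a) hf hpos
          have hsq := sq2_sq (a := a) hpos.le (by linarith)
          have hs0 := sq2_nonneg (a := a) x
          have h1 : sq2 a x ≤ a + c := by rw [hxe] at hfx; linarith
          have h2 : x * (2*a - x) ≤ (a+c)^2 := by nlinarith
          have h3 : w ≤ a - x := by
            rw [hwdef]
            exact (Real.sqrt_le_left (by linarith : (0:ℝ) ≤ a - x)).2 (by nlinarith)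
          exact ⟨⟨hpos, by linarith⟩, ne_of_lt hx2⟩
      · rintro ⟨⟨hx0, hxg⟩, hxa⟩
        have hxa' : x < a := lt_of_le_of_ne (by linarith) hxa
        have hxe := f_pos (a := a) hf hx0
        have hsq := sq2_sq (a := a) hx0.le (by linarith)
        have h5 : sq2 a x ≤ a + c := by
          rw [sq2]
          exact (Real.sqrt_le_left (by linarith : (0:ℝ) ≤ a + c)).2 (by nlinarith)
        refine ⟨by rw [hxe]; linarith, ⟨⟨by linarith, hxa'⟩, hx0.ne'⟩⟩
    rw [hset, measure_diff_null (muT_singleton a), muT_Ioc ha (by linarith) (by linarith)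
      (by linarith), muT_Iic ha hc (by linarith)]
    congr 1
    have key : Phi a (a - w) - Phi a 0 - Phi a c = 0 := by
      rw [Phi_zero ha, Phi, Phi, abs_of_nonneg (by linarith : (0:ℝ) ≤ a - w),
        abs_of_nonpos hc0]
      rw [show (1:ℝ)/2 = a^2/(2*a^2) by rw [_root_.eq_div_iff (by positivity)]; ring, ← sub_div, ← sub_div,
        _root_.div_eq_zero_iff]
      left
      linear_combination (-1) * hw2
    linarith [key]
  rcases le_or_gt c a with hca | hca
  · -- 0 < c ≤ a
    set w := Real.sqrt (a^2 - (a-c)^2) with hwdef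
    have hwnn : 0 ≤ a^2 - (a-c)^2 := by nlinarith
    have hw2 : w^2 = a^2 - (a-c)^2 := Real.sq_sqrt hwnn
    have hw0 : 0 ≤ w := Real.sqrt_nonneg _
    have hwa : w ≤ a := by nlinarith
    have hset : f ⁻¹' Iic c ∩ SS a = (Ioc (-a) (-a + w) \ {0}) ∪ Ioo 0 a := by
      ext x
      simp only [mem_inter_iff, mem_preimage, mem_Iic, SS, mem_diff, mem_Ioo,
        mem_singleton_iff, mem_Ioc, mem_union]
      constructor
      · rintro ⟨hfx, ⟨⟨hx1, hx2⟩, hx0⟩⟩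
        rcases lt_or_gt_of_ne (hx0 : x ≠ 0) with hneg | hpos
        · left
          have hxe := f_neg (a := a) hf hneg
          have h1 : a - c ≤ sq2 a (-x) := by rw [hxe] at hfx; linarith
          have hsq := sq2_sq (a := a) (by linarith : (0:ℝ) ≤ -x) (by linarith)
          have h2 : (a - c)^2 ≤ (-x) * (2*a - -x) := by
            nlinarith [sq2_nonneg (a := a) (-x)]
          have h3 : (x + a)^2 ≤ w^2 := by nlinarith
          have h4 : x + a ≤ w := by nlinarith
          exact ⟨⟨hx1, by linarith⟩, hx0⟩
        · right; exact ⟨hpos, hx2⟩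
      · rintro (⟨⟨hx1, hxg⟩, hx0⟩ | ⟨hx0, hx2⟩)
        · have hxneg : x < 0 := lt_of_le_of_ne (by linarith) hx0
          have hxe := f_neg (a := a) hf hxneg
          have hsq := sq2_sq (a := a) (by linarith : (0:ℝ) ≤ -x) (by linarith)
          have h4 : x + a ≤ w := by linarith
          have h3 : (x + a)^2 ≤ w^2 := by nlinarith
          have h2 : (a - c)^2 ≤ (-x) * (2*a - -x) := by nlinarith
          have h1 : a - c ≤ sq2 a (-x) := by
            rw [sq2]
            exact (Real.le_sqrt (by linarith) (by nlinarith)).2 h2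
          refine ⟨by rw [hxe]; linarith, ⟨⟨hx1, by linarith⟩, hx0⟩⟩
        · have hxe := f_pos (a := a) hf hx0
          have := sq2_le_a ha x
          refine ⟨by rw [hxe]; linarith, ⟨⟨by linarith, hx2⟩, hx0.ne'⟩⟩
    have hIoo : Ioo (0:ℝ) a = Ioc 0 a \ {a} := by
      ext x
      simp only [mem_Ioo, mem_diff, mem_Ioc, mem_singleton_iff]
      constructor
      · rintro ⟨h1, h2⟩; exact ⟨⟨h1, h2.le⟩, ne_of_lt h2⟩
      · rintro ⟨⟨h1, h2⟩, h3⟩; exact ⟨h1, lt_of_le_of_ne h2 h3⟩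
    have hd : Disjoint (Ioc (-a) (-a + w) \ {0}) (Ioo (0:ℝ) a) := by
      rw [Set.disjoint_left]
      rintro x ⟨hx1, hx2⟩ hx3
      have h1 : x ≤ -a + w := hx1.2
      have h2 : x ≠ 0 := hx2
      have h3 : 0 < x := hx3.1
      have : x ≤ 0 := by linarith
      rcases eq_or_lt_of_le this with h | h
      · exact h2 h
      · linarith
    rw [hset, measure_union hd measurableSet_Ioo,
      measure_diff_null (muT_singleton 0), hIoo, measure_diff_null (muT_singleton a),
      muT_Ioc ha le_rfl (by linarith) (by linarith),
      muT_Ioc ha (by linarith) le_rfl ha.le,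
      muT_Iic ha (by linarith) hca, Phi_neg_a ha, Phi_zero ha, Phi_a ha]
    have hPg : Phi a (-a + w) = (w)^2/(2*a^2) := by
      rw [Phi, abs_of_nonpos (by linarith : -a + w ≤ 0)]
      field_simp
      ring
    rw [← ENNReal.ofReal_add (by rw [sub_zero, hPg]; positivity) (by norm_num)]
    congr 1
    have key : Phi a (-a + w) + (1 - 1/2) - Phi a c = 0 := by
      rw [hPg, Phi, abs_of_nonneg hc0.le]
      rw [show (1:ℝ) - 1/2 = a^2/(2*a^2) by rw [_root_.eq_div_iff (by positivity)]; ring, ← add_div,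
        ← sub_div, _root_.div_eq_zero_iff]
      left
      linear_combination hw2
    linarith [key]
  · -- a < c
    rw [muT_inter_S (Iic c)]
    have h1 : f ⁻¹' Iic c ∩ SS a = SS a := by
      rw [inter_eq_right]
      rintro x ⟨⟨hx1, hx2⟩, hx0⟩
      rw [mem_preimage, mem_Iic]
      rcases lt_or_gt_of_ne (hx0 : x ≠ 0) with hneg | hpos
      · have hxe := f_neg (a := a) hf hneg
        have := sq2_nonneg (a := a) (-x)
        rw [hxe]; linarith
      · have hxe := f_pos (a := a) hf hpos
        have := sq2_le_a ha x
        rw [hxe]; linarith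
    have h2 : Iic c ∩ SS a = SS a := by
      rw [inter_eq_right]
      rintro x ⟨⟨_, hx2⟩, _⟩
      rw [mem_Iic]; linarith
    rw [h1, h2]

end TentAux

/-- For the probability measure `μ` on `[-a,a]` with density
`ρ(x) = (a - |x|)/a²`, the map `f(x) = (x/|x|)(√(2a|x| - x²) - a)` pushes `μ`
forward to itself and the plan `(id,f)_#μ` is optimal for the two-marginal
Kantorovich problem with Coulomb cost. -/
theorem tent_density_comotion_optimal
    (a : ℝ) (ha : 0 < a)
    (μ : Measure ℝ)
    (hμ : μ = volume.withDensity
      (fun x => if x ∈ Set.Icc (-a) a then ENNReal.ofReal ((a - |x|) / a ^ 2) else 0))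
    (f : ℝ → ℝ)
    (hf : ∀ x, x ≠ 0 → f x = (x / |x|) * (Real.sqrt (2 * a * |x| - x ^ 2) - a)) :
    Measure.map f μ = μ ∧
    ∫⁻ x, (edist x (f x))⁻¹ ∂μ =
      ⨅ (γ : Measure (ℝ × ℝ))
        (_ : IsProbabilityMeasure γ)
        (_ : Measure.map Prod.fst γ = μ)
        (_ : Measure.map Prod.snd γ = μ),
        ∫⁻ p, (edist p.1 p.2)⁻¹ ∂γ := by
  have hmu : μ = muT a := hμ
  subst hmu
  have ha' : a ≠ 0 := ha.ne'
  have hfm := f_measurable (a := a) hf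
  haveI : IsProbabilityMeasure (muT a) := muT_prob ha
  have hmap : Measure.map f (muT a) = muT a := map_f_eq ha hf
  refine ⟨hmap, ?_⟩
  -- helper : edist formula off the diagonal
  have hedist : ∀ (x y : ℝ), x ≠ y → (edist x y)⁻¹ = ENNReal.ofReal (|x - y|⁻¹) := by
    intro x y hxy
    rw [edist_dist, Real.dist_eq,
      ENNReal.ofReal_inv_of_pos (abs_pos.2 (sub_ne_zero.2 hxy))]
  -- a.e. support facts on muT a
  have haeS : ∀ᵐ x ∂(muT a), x ∈ Ioo (-a) a ∧ x ≠ 0 := by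
    rw [ae_iff]
    refine measure_mono_null ?_ (muT_SS_compl (a := a))
    intro x hx
    simp only [mem_setOf_eq, not_and, SS, mem_compl_iff, mem_diff, mem_Ioo,
      mem_singleton_iff] at hx ⊢
    tauto
  have hspec : ∀ᵐ x ∂(muT a), f x ∈ Icc (-a) a ∧ |x - f x| = dd a |x| ∧
      UU a x + UU a (f x) = (dd a |x|)⁻¹ :=
    haeS.mono fun x hx => f_spec ha hf ⟨hx.1.1, hx.1.2⟩ hx.2
  have hb : ∀ᵐ x ∂(muT a), a/3 ≤ |x - f x| := by
    filter_upwards [haeS, hspec] with x hx h2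
    rw [h2.2.1]
    exact dd_ge ha (abs_nonneg x) (abs_le.2 ⟨hx.1.1.le, hx.1.2.le⟩)
  have hbne : ∀ᵐ x ∂(muT a), x ≠ f x := by
    filter_upwards [hb] with x hx
    intro h
    rw [← h] at hx
    simp only [sub_self, abs_zero] at hx
    linarith
  -- real valued cost on the map side
  set Cf : ℝ → ℝ := fun x => |x - f x|⁻¹ with hCf
  have hCfmeas : Measurable Cf := ((measurable_id.sub hfm).abs).inv
  have hCfint : Integrable Cf (muT a) := by
    refine ⟨hCfmeas.aestronglyMeasurable, HasFiniteIntegral.of_bounded (C := 3/a) ?_⟩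
    filter_upwards [hb] with x hx
    have h0 : (0:ℝ) < a/3 := by linarith
    rw [Real.norm_eq_abs, hCf, abs_of_nonneg (inv_nonneg.2 (abs_nonneg _))]
    calc |x - f x|⁻¹ ≤ (a/3)⁻¹ := inv_anti₀ h0 hx
    _ = 3/a := by rw [inv_div]
  have hmeq : ∫⁻ x, (edist x (f x))⁻¹ ∂(muT a) = ENNReal.ofReal (∫ x, Cf x ∂(muT a)) := by
    rw [ofReal_integral_eq_lintegral_ofReal hCfint
      (ae_of_all _ fun x => by rw [hCf]; positivity)]
    refine lintegral_congr_ae ?_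
    filter_upwards [hbne] with x hx
    exact hedist x (f x) hx
  -- the map-side real integral equals 2 ∫ UU
  have hUmeas : Measurable (UU a) := (continuous_UU ha).measurable
  obtain ⟨M, hM⟩ := (isCompact_Icc (a := -a) (b := a)).exists_bound_of_continuousOn
    (continuous_UU ha).continuousOn
  have haeIcc1 : ∀ᵐ x ∂(muT a), x ∈ Icc (-a) a :=
    haeS.mono fun x hx => ⟨hx.1.1.le, hx.1.2.le⟩
  have hUint : Integrable (UU a) (muT a) :=
    ⟨(continuous_UU ha).aestronglyMeasurable,
      HasFiniteIntegral.of_bounded (C := M) (haeIcc1.mono fun x hx => hM x hx)⟩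
  have hUfint : Integrable (fun x => UU a (f x)) (muT a) :=
    ⟨(continuous_UU ha).comp_aestronglyMeasurable hfm.aestronglyMeasurable,
      HasFiniteIntegral.of_bounded (C := M) (hspec.mono fun x hx => hM _ hx.1)⟩
  have hinteq : ∫ x, Cf x ∂(muT a) =
      ∫ x, UU a x ∂(muT a) + ∫ x, UU a x ∂(muT a) := by
    have h1 : ∫ x, Cf x ∂(muT a) = ∫ x, (UU a x + UU a (f x)) ∂(muT a) := by
      refine integral_congr_ae ?_
      filter_upwards [hspec] with x hx
      rw [hCf]
      simp only
      rw [hx.2.1, hx.2.2]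
    have h2 : ∫ x, UU a (f x) ∂(muT a) = ∫ x, UU a x ∂(muT a) := by
      rw [← integral_map hfm.aemeasurable ((continuous_UU ha).aestronglyMeasurable), hmap]
    rw [h1, integral_add hUint hUfint, h2]
  set A := ∫ x, UU a x ∂(muT a) with hA
  apply le_antisymm
  · -- lower bound : LHS ≤ every admissible cost
    refine le_iInf fun γ => le_iInf fun hγ => le_iInf fun hfst => le_iInf fun hsnd => ?_
    by_cases hfin : ∫⁻ p, (edist p.1 p.2)⁻¹ ∂γ = ⊤
    · rw [hfin]; exact le_top
    haveI := hγ
    -- γ is concentrated on Icc × Icc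
    have hIccnull : muT a ((Icc (-a) a)ᶜ) = 0 := by
      apply muT_null measurableSet_Icc.compl
      rw [compl_inter_self]
      simp
    have haefst : ∀ᵐ p ∂γ, p.1 ∈ Icc (-a) a := by
      rw [ae_iff]
      have h1 : γ (Prod.fst ⁻¹' (Icc (-a) a)ᶜ) = 0 := by
        rw [← Measure.map_apply measurable_fst measurableSet_Icc.compl, hfst]
        exact hIccnull
      exact h1
    have haesnd : ∀ᵐ p ∂γ, p.2 ∈ Icc (-a) a := by
      rw [ae_iff]
      have h1 : γ (Prod.snd ⁻¹' (Icc (-a) a)ᶜ) = 0 := by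
        rw [← Measure.map_apply measurable_snd measurableSet_Icc.compl, hsnd]
        exact hIccnull
      exact h1
    -- γ gives no mass to the diagonal
    have haeneq : ∀ᵐ p ∂γ, p.1 ≠ p.2 := by
      set Dg : Set (ℝ × ℝ) := {p | p.1 = p.2} with hDgd
      have hDg : MeasurableSet Dg := (isClosed_eq continuous_fst continuous_snd).measurableSet
      have hDg0 : γ Dg = 0 := by
        by_contra hne
        have h1 : ∫⁻ p in Dg, (edist p.1 p.2)⁻¹ ∂γ = ∫⁻ _ in Dg, (⊤:ENNReal) ∂γ := by
          refine setLIntegral_congr_fun hDg (fun p hp => ?_)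
          have : p.1 = p.2 := hp
          rw [this]
          simp
        have hge : (⊤:ENNReal) * γ Dg ≤ ∫⁻ p, (edist p.1 p.2)⁻¹ ∂γ := by
          calc (⊤:ENNReal) * γ Dg = ∫⁻ _ in Dg, (⊤:ENNReal) ∂γ := (setLIntegral_const Dg ⊤).symm
          _ = ∫⁻ p in Dg, (edist p.1 p.2)⁻¹ ∂γ := h1.symm
          _ ≤ ∫⁻ p, (edist p.1 p.2)⁻¹ ∂γ := setLIntegral_le_lintegral _ _
        rw [ENNReal.top_mul hne] at hge
        exact hfin (top_le_iff.1 hge)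
      rw [ae_iff]
      have : {p : ℝ × ℝ | ¬ p.1 ≠ p.2} = Dg := by
        ext p
        simp [hDgd]
      rw [this]
      exact hDg0
    -- real valued cost on γ's side
    set C : ℝ × ℝ → ℝ := fun p => |p.1 - p.2|⁻¹ with hCd
    have hCmeas : Measurable C := ((measurable_fst.sub measurable_snd).abs).inv
    have hcosteq : ∫⁻ p, (edist p.1 p.2)⁻¹ ∂γ = ∫⁻ p, ENNReal.ofReal (C p) ∂γ :=
      lintegral_congr_ae (haeneq.mono fun p hp => hedist _ _ hp)
    have hCint : Integrable C γ := by
      refine ⟨hCmeas.aestronglyMeasurable, ?_⟩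
      rw [HasFiniteIntegral]
      have heq : ∀ p : ℝ × ℝ, ‖C p‖ₑ = ENNReal.ofReal (C p) := fun p =>
        Real.enorm_eq_ofReal (by rw [hCd]; positivity)
      rw [lintegral_congr heq, ← hcosteq]
      exact lt_top_iff_ne_top.2 hfin
    have hUfst : Integrable (fun p : ℝ × ℝ => UU a p.1) γ :=
      ⟨(continuous_UU ha).comp_aestronglyMeasurable measurable_fst.aestronglyMeasurable,
        HasFiniteIntegral.of_bounded (C := M) (haefst.mono fun p hp => hM _ hp)⟩
    have hUsnd : Integrable (fun p : ℝ × ℝ => UU a p.2) γ :=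
      ⟨(continuous_UU ha).comp_aestronglyMeasurable measurable_snd.aestronglyMeasurable,
        HasFiniteIntegral.of_bounded (C := M) (haesnd.mono fun p hp => hM _ hp)⟩
    have hsum : ∫ p, (UU a p.1 + UU a p.2) ∂γ = A + A := by
      rw [integral_add hUfst hUsnd]
      congr 1
      · have h3 := integral_map (φ := Prod.fst) (μ := γ) measurable_fst.aemeasurable
          ((continuous_UU ha).aestronglyMeasurable (μ := Measure.map Prod.fst γ))
        rw [hfst] at h3
        rw [hA, ← h3]
      · have h3 := integral_map (φ := Prod.snd) (μ := γ) measurable_snd.aemeasurable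
          ((continuous_UU ha).aestronglyMeasurable (μ := Measure.map Prod.snd γ))
        rw [hsnd] at h3
        rw [hA, ← h3]
    have hptwise : ∀ᵐ p ∂γ, UU a p.1 + UU a p.2 ≤ C p := by
      filter_upwards [haefst, haesnd, haeneq] with p h1 h2 h3
      exact UU_add_le' ha h1 h2 h3
    have hcompare : A + A ≤ ∫ p, C p ∂γ := by
      rw [← hsum]
      exact integral_mono_ae (hUfst.add hUsnd) hCint hptwise
    rw [hmeq, hinteq, hcosteq]
    calc ENNReal.ofReal (A + A) ≤ ENNReal.ofReal (∫ p, C p ∂γ) :=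
      ENNReal.ofReal_le_ofReal hcompare
    _ = ∫⁻ p, ENNReal.ofReal (C p) ∂γ :=
      ofReal_integral_eq_lintegral_ofReal hCint
        (ae_of_all _ fun p => by rw [hCd]; positivity)
  · -- upper bound via the plan (id, f)
    set γ₀ := Measure.map (fun x => (x, f x)) (muT a) with hγ₀
    have hmeas2 : Measurable (fun x : ℝ => (x, f x)) := measurable_id.prodMk hfm
    have hprob : IsProbabilityMeasure γ₀ := Measure.isProbabilityMeasure_map hmeas2.aemeasurable
    have h1 : Measure.map Prod.fst γ₀ = muT a := by
      rw [hγ₀, Measure.map_map measurable_fst hmeas2]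
      exact Measure.map_id
    have h2 : Measure.map Prod.snd γ₀ = muT a := by
      rw [hγ₀, Measure.map_map measurable_snd hmeas2]
      exact hmap
    have hc : ∫⁻ p, (edist p.1 p.2)⁻¹ ∂γ₀ = ∫⁻ x, (edist x (f x))⁻¹ ∂(muT a) := by
      rw [hγ₀, lintegral_map (f := fun p : ℝ × ℝ => (edist p.1 p.2)⁻¹) ((measurable_fst.edist measurable_snd).inv) hmeas2]
    refine iInf_le_of_le γ₀ ?_
    rw [iInf_pos hprob, iInf_pos h1, iInf_pos h2, hc]
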